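/- Let N be a proper unrooted phylogenetic network on leaf set X with |X| ≥ 2. Then τ(N) ≤ ℓ(N), where τ(N) is the minimum tier of a support network of N and ℓ(N) is the minimum number of non-X leaves over all spanning trees of N. -/

import Mathlib

open SimpleGraph

/-- Degree of a vertex (cardinality of its neighbour set). -/
noncomputable def deg {V : Type*} (G : SimpleGraph V) (v : V) : ℕ := (G.neighborSet v).ncard

/-- Leaves (degree-1 vertices) of a graph. -/
def leaves {V : Type*} (G : SimpleGraph V) : Set V := {v | deg G v = 1}

/-- An unrooted phylogenetic network on `X`: connected, no degree-2 vertices,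
and the degree-1 vertices are exactly the elements of `X`. -/
def IsPhylo {V : Type*} (G : SimpleGraph V) (X : Set V) : Prop :=
  G.Connected ∧ (∀ v, deg G v ≠ 2) ∧ leaves G = X

/-- Proper: every component obtained by removing a cut edge or a cut vertex
contains an element of `X` (every vertex can still reach an element of `X`). -/
def IsProper {V : Type*} (G : SimpleGraph V) (X : Set V) : Prop :=
  (∀ e ∈ G.edgeSet, ∀ v : V, ∃ x ∈ X, (G.deleteEdges {e}).Reachable v x) ∧
  (∀ w : V, ∀ v : ({w}ᶜ : Set V), ∃ x : ({w}ᶜ : Set V),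
      (x : V) ∈ X ∧ (G.induce {w}ᶜ).Reachable v x)

/-- A spanning tree of `G`, viewed as a graph on the same vertex set. -/
def IsSpanningTree {V : Type*} (G T : SimpleGraph V) : Prop := T ≤ G ∧ T.IsTree

/-- A support tree: a spanning tree whose leaf set is exactly `X`. -/
def IsSupportTree {V : Type*} (G T : SimpleGraph V) (X : Set V) : Prop :=
  IsSpanningTree G T ∧ leaves T = X

/-- `G` is tree-based (w.r.t. leaf set `X`): it has a support tree. -/
def TreeBased {V : Type*} (G : SimpleGraph V) (X : Set V) : Prop := ∃ T, IsSupportTree G T X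

/-- `ℓ(N)`: minimum number of non-`X` leaves over all spanning trees. -/
noncomputable def ell {V : Type*} (G : SimpleGraph V) (X : Set V) : ℕ :=
  sInf {n | ∃ T, IsSpanningTree G T ∧ n = (leaves T \ X).ncard}

/-- Support network: a connected spanning subgraph whose leaves are exactly `X`. -/
def IsSupportNet {V : Type*} (G H : SimpleGraph V) (X : Set V) : Prop :=
  H ≤ G ∧ H.Connected ∧ leaves H = X

/-- Tier of a (connected, spanning) graph: `|E| - |V| + 1`. -/
noncomputable def tier {V : Type*} (H : SimpleGraph V) : ℕ := H.edgeSet.ncard + 1 - Nat.card V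

/-- `τ(N)`: minimal tier of a support network of `N`. -/
noncomputable def tauMeasure {V : Type*} (G : SimpleGraph V) (X : Set V) : ℕ :=
  sInf {k | ∃ H, IsSupportNet G H X ∧ k = tier H}

section Auxiliary

variable {V : Type*}

lemma deg_mono [Finite V] {G H : SimpleGraph V} (h : G ≤ H) (v : V) : deg G v ≤ deg H v :=
  Set.ncard_le_ncard (fun _ hw => h hw) (Set.toFinite _)

lemma one_le_deg [Finite V] {G : SimpleGraph V} (hc : G.Connected) [Nontrivial V] (v : V) :
    1 ≤ deg G v := by
  obtain ⟨w, hw⟩ := exists_ne v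
  obtain ⟨p⟩ := hc.preconnected v w
  have hne : (G.neighborSet v).Nonempty := by
    cases p with
    | nil => exact absurd rfl hw
    | cons h q => exact ⟨_, h⟩
  exact (Set.ncard_pos (Set.toFinite _)).mpr hne

lemma reach_del {G : SimpleGraph V} {v w : V}
    (h : (G \ fromEdgeSet {s(v, w)}).Reachable v w) :
    ∀ {a b : V}, G.Walk a b → (G \ fromEdgeSet {s(v, w)}).Reachable a b := by
  intro a b p
  induction p with
  | nil => exact Reachable.refl _
  | @cons a c b hadj q ih =>
    refine Reachable.trans ?_ ih
    by_cases he : s(a, c) = s(v, w)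
    · rw [Sym2.eq_iff] at he
      rcases he with ⟨rfl, rfl⟩ | ⟨rfl, rfl⟩
      · exact h
      · exact h.symm
    · refine Adj.reachable ?_
      rw [sdiff_adj]
      exact ⟨hadj, by simp only [fromEdgeSet_adj, Set.mem_singleton_iff]; tauto⟩

lemma exists_spanning_tree [Finite V] {G : SimpleGraph V} (hc : G.Connected) :
    ∃ T, T ≤ G ∧ T.IsTree := by
  classical
  have hs : G.edgeSet.ncard ∈ {n | ∃ H : SimpleGraph V, H ≤ G ∧ H.Connected ∧ H.edgeSet.ncard = n} :=
    ⟨G, le_refl _, hc, rfl⟩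
  obtain ⟨T, hTG, hTc, hTcard⟩ := Nat.sInf_mem ⟨_, hs⟩
  refine ⟨T, hTG, hTc, ?_⟩
  intro u c hcyc
  have hne : c.edges ≠ [] := by
    have h3 := hcyc.three_le_length
    have hl := c.length_edges
    intro h; rw [h] at hl; simp at hl; omega
  obtain ⟨e, he⟩ := List.exists_mem_of_ne_nil _ hne
  induction e using Sym2.ind with
  | _ x y =>
  have hreach : T.Adj x y ∧ (T \ fromEdgeSet {s(x, y)}).Reachable x y :=
    (adj_and_reachable_delete_edges_iff_exists_cycle (G := T) (v := x) (w := y)).mpr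
      ⟨u, c, hcyc, he⟩
  set T' := T \ fromEdgeSet {s(x, y)} with hT'
  have hT'c : T'.Connected := by
    rw [connected_iff]
    refine ⟨fun a b => ?_, hTc.nonempty⟩
    obtain ⟨p⟩ := hTc.preconnected a b
    exact reach_del hreach.2 p
  have hT'le : T' ≤ G := le_trans sdiff_le hTG
  have hedge : T'.edgeSet = T.edgeSet \ {s(x, y)} := by
    rw [hT', edgeSet_sdiff, edgeSet_fromEdgeSet]
    congr 1
    ext e
    simp only [Set.mem_diff, Set.mem_singleton_iff, Set.mem_setOf_eq]
    constructor
    · exact fun h => h.1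
    · rintro rfl
      exact ⟨rfl, by rw [Sym2.mem_diagSet, Sym2.mk_isDiag_iff]; exact hreach.1.ne⟩
  have hlt : T'.edgeSet.ncard < T.edgeSet.ncard := by
    rw [hedge]
    exact Set.ncard_diff_singleton_lt_of_mem (T.mem_edgeSet.mpr hreach.1) (Set.toFinite _)
  have hmem' : T'.edgeSet.ncard ∈
      {n | ∃ H : SimpleGraph V, H ≤ G ∧ H.Connected ∧ H.edgeSet.ncard = n} :=
    ⟨T', hT'le, hT'c, rfl⟩
  have hle := Nat.sInf_le hmem'
  omega

end Auxiliary

theorem stmt3 {V : Type*} [Finite V] (G : SimpleGraph V) (X : Set V)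
    (hphylo : IsPhylo G X) (hproper : IsProper G X) (hX : 2 ≤ X.ncard) :
    tauMeasure G X ≤ ell G X := by
  classical
  obtain ⟨hconn, hdeg2, hleaves⟩ := hphylo
  have hV2 : 1 < Nat.card V := by
    have := Set.ncard_le_ncard (Set.subset_univ X) Set.finite_univ
    rw [Set.ncard_univ] at this
    omega
  haveI : Nontrivial V := Finite.one_lt_card_iff_nontrivial.mp hV2
  obtain ⟨T0, hT0G, hT0t⟩ := exists_spanning_tree hconn
  have hne : {n | ∃ T, IsSpanningTree G T ∧ n = (leaves T \ X).ncard}.Nonempty :=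
    ⟨_, T0, ⟨hT0G, hT0t⟩, rfl⟩
  obtain ⟨T, ⟨hTG, hTtree⟩, hTcard⟩ := Nat.sInf_mem hne
  set L := leaves T \ X with hLdef
  -- every non-X leaf of T has a G-neighbour not a T-neighbour
  have hextra : ∀ u ∈ L, ∃ w, G.Adj u w ∧ ¬ T.Adj u w := by
    intro u hu
    have h1 : deg T u = 1 := hu.1
    have hG1 : deg G u ≠ 1 := fun h => hu.2 (hleaves ▸ h)
    have hG0 : 1 ≤ deg G u := one_le_deg hconn u
    have hG2 : 2 ≤ deg G u := by have := hdeg2 u; omega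
    by_contra hno
    push_neg at hno
    have hsub : G.neighborSet u ⊆ T.neighborSet u := fun w hw => hno w hw
    have hle := Set.ncard_le_ncard hsub (Set.toFinite _)
    have h1' : (T.neighborSet u).ncard = 1 := h1
    have h2' : 2 ≤ (G.neighborSet u).ncard := hG2
    omega
  have hch : ∀ u : V, ∃ w, u ∈ L → (G.Adj u w ∧ ¬ T.Adj u w) := by
    intro u
    by_cases hu : u ∈ L
    · obtain ⟨w, hw⟩ := hextra u hu
      exact ⟨w, fun _ => hw⟩
    · exact ⟨u, fun h => absurd h hu⟩
  choose f hf using hch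
  set S : Set (Sym2 V) := (fun u => s(u, f u)) '' L with hSdef
  set H : SimpleGraph V := T ⊔ fromEdgeSet S with hHdef
  have hTH : T ≤ H := le_sup_left
  have hHG : H ≤ G := by
    refine sup_le hTG ?_
    intro a b hab
    rw [fromEdgeSet_adj] at hab
    obtain ⟨⟨u, hu, he⟩, _⟩ := hab
    have hfu := hf u hu
    rw [Sym2.eq_iff] at he
    rcases he with ⟨rfl, rfl⟩ | ⟨rfl, rfl⟩
    · exact hfu.1
    · exact hfu.1.symm
  have hHconn : H.Connected := hTtree.isConnected.mono hTH
  -- leaves of H are exactly X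
  have hdegX : ∀ v ∈ X, deg H v = 1 := by
    intro v hv
    have hGv : deg G v = 1 := by rw [← hleaves] at hv; exact hv
    have h1 : 1 ≤ deg T v := one_le_deg hTtree.isConnected v
    have h2 := deg_mono hTH v
    have h3 := deg_mono hHG v
    omega
  have hdegnX : ∀ v, v ∉ X → deg H v ≠ 1 := by
    intro v hv
    by_cases hvT : deg T v = 1
    · have hvL : v ∈ L := ⟨hvT, hv⟩
      obtain ⟨t, ht⟩ : (T.neighborSet v).Nonempty := by
        rw [← Set.ncard_pos (Set.toFinite _)]
        have : (T.neighborSet v).ncard = 1 := hvT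
        omega
      have h1 : H.Adj v t := hTH ht
      have h2 : H.Adj v (f v) := by
        have hS : (fromEdgeSet S).Adj v (f v) := by
          rw [fromEdgeSet_adj]
          exact ⟨⟨v, hvL, rfl⟩, (hf v hvL).1.ne⟩
        exact (le_sup_right : fromEdgeSet S ≤ H) hS
      have hne2 : t ≠ f v := by
        rintro rfl
        exact (hf v hvL).2 ht
      have hsub : ({t, f v} : Set V) ⊆ H.neighborSet v := by
        rintro x (rfl | rfl)
        · exact h1
        · exact h2
      have hle := Set.ncard_le_ncard hsub (Set.toFinite _)
      rw [Set.ncard_pair hne2] at hle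
      have : 2 ≤ deg H v := hle
      omega
    · have h1 : 1 ≤ deg T v := one_le_deg hTtree.isConnected v
      have h2 := deg_mono hTH v
      omega
  have hleavesH : leaves H = X := by
    ext v
    constructor
    · intro h
      by_contra hv
      exact hdegnX v hv h
    · exact hdegX v
  -- edge counting
  haveI : Fintype V := Fintype.ofFinite V
  have hTedge : T.edgeSet.ncard + 1 = Nat.card V := by
    rw [Set.ncard_eq_toFinset_card', Nat.card_eq_fintype_card]
    exact hTtree.card_edgeFinset
  have hScard : S.ncard ≤ L.ncard := Set.ncard_image_le (Set.toFinite _)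
  have hHedge : H.edgeSet.ncard ≤ T.edgeSet.ncard + S.ncard := by
    rw [hHdef, edgeSet_sup]
    refine le_trans (Set.ncard_union_le _ _) ?_
    have : ((fromEdgeSet S).edgeSet).ncard ≤ S.ncard := by
      rw [edgeSet_fromEdgeSet]
      exact Set.ncard_le_ncard Set.diff_subset (Set.toFinite _)
    omega
  have htier : tier H ≤ L.ncard := by
    have : tier H = H.edgeSet.ncard + 1 - Nat.card V := rfl
    omega
  have hmem : tier H ∈ {k | ∃ H', IsSupportNet G H' X ∧ k = tier H'} :=
    ⟨H, ⟨hHG, hHconn, hleavesH⟩, rfl⟩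
  calc tauMeasure G X ≤ tier H := Nat.sInf_le hmem
    _ ≤ L.ncard := htier
    _ = ell G X := hTcard.symm
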